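/- (Corrected quantitative form of Theorem 3.4) For every n ≥ 1 and every v ∈ ℝ^n, the maximum over all components of the implicit-background composite vector satisfies max( max_i v_i , −logsumexp(v) ) ≥ −(1/2)·log n. In particular, for n = 1 this maximum is always ≥ 0. -/
import Mathlib


/-- `logsumexp(v) = log(Σ_j exp(v_j))`. -/
noncomputable def logsumexp {n : ℕ} (v : Fin n → ℝ) : ℝ :=
  Real.log (∑ j, Real.exp (v j))

/-- (Corrected quantitative form of Theorem 3.4) For every `n ≥ 1` and `v ∈ ℝ^n`, the
maximum component of the implicit-background composite vector satisfies
`max(max_i v_i, −logsumexp(v)) ≥ −(1/2)·log n`; in particular for `n = 1` it is `≥ 0`. -/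
theorem impBG_max_lower_bound {n : ℕ} (hn : 1 ≤ n) (v : Fin n → ℝ) :
    max (Finset.univ.sup' ⟨⟨0, hn⟩, Finset.mem_univ _⟩ v) (-logsumexp v)
      ≥ -(1 / 2) * Real.log n ∧
    (n = 1 →
      max (Finset.univ.sup' ⟨⟨0, hn⟩, Finset.mem_univ _⟩ v) (-logsumexp v) ≥ 0) := by
  set M := Finset.univ.sup' ⟨⟨0, hn⟩, Finset.mem_univ _⟩ v with hM
  have hsum_le : (∑ j, Real.exp (v j)) ≤ n * Real.exp M := by
    calc (∑ j, Real.exp (v j)) ≤ ∑ _j : Fin n, Real.exp M :=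
          Finset.sum_le_sum fun j _ => Real.exp_le_exp.2
            (Finset.le_sup' v (Finset.mem_univ j))
      _ = n * Real.exp M := by simp [mul_comm]
  have hnp : (0:ℝ) < n := by exact_mod_cast hn
  have hls : logsumexp v ≤ Real.log n + M := by
    have := Real.log_le_log (Finset.sum_pos (fun j _ => Real.exp_pos _) (Finset.univ_nonempty_iff.2 ⟨⟨0,hn⟩⟩)) hsum_le
    simpa [logsumexp, Real.log_mul (ne_of_gt hnp) (Real.exp_ne_zero M),
      Real.log_exp] using this
  have key : max M (-logsumexp v) ≥ -(1 / 2) * Real.log n := by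
    rcases le_total (-(1 / 2) * Real.log n) M with h | h
    · exact le_max_of_le_left h
    · refine le_max_of_le_right ?_
      have : -(Real.log n + M) ≤ -logsumexp v := by linarith
      have hM2 : -M ≥ (1/2) * Real.log n := by linarith
      linarith
  refine ⟨key, fun h1 => ?_⟩
  subst h1
  simpa using key
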